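/- For 1 ≤ α ≤ 2, the N×N Hankel matrix H with entries H_{ij} = g_{i+j}^(α), where g_k^(α) = (-1)^k · binomial(α,k), is positive semidefinite. -/

import Mathlib

/-- Alternating fractional binomial coefficient `g_k^(α) = (-1)^k ⬝ binom(α,k)`. -/
noncomputable def fracBinom (α : ℝ) (k : ℕ) : ℝ :=
  ((-1 : ℝ) ^ k / (Nat.factorial k : ℝ)) * ∏ i ∈ Finset.range k, (α - i)

lemma fracBinom_succ (α : ℝ) (k : ℕ) :
    fracBinom α (k + 1) = (((k : ℝ) - α) / ((k : ℝ) + 1)) * fracBinom α k := by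
  have hk : ((Nat.factorial k : ℝ)) ≠ 0 := Nat.cast_ne_zero.mpr (Nat.factorial_ne_zero k)
  have hk1 : ((k : ℝ) + 1) ≠ 0 := by positivity
  simp only [fracBinom, Finset.prod_range_succ, Nat.factorial_succ, pow_succ]
  push_cast
  field_simp
  ring

lemma fracBinom_two (α : ℝ) : fracBinom α 2 = α * (α - 1) / 2 := by
  simp [fracBinom, Finset.prod_range_succ]
  ring

/-- The moment integral. -/
noncomputable def momInt (α : ℝ) (k : ℕ) : ℝ :=
  ∫ t in (0:ℝ)..1, t ^ ((k : ℝ) - α - 1) * (1 - t) ^ α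

lemma cont_rpow_aux (α : ℝ) (hα : 0 ≤ α) : Continuous fun t : ℝ => (1 - t) ^ α := by
  apply continuous_iff_continuousAt.mpr
  intro x
  exact (Real.continuousAt_rpow_const _ _ (Or.inr hα)).comp
    (continuous_const.sub continuous_id).continuousAt

lemma mom_integrable (α p : ℝ) (hα : 0 ≤ α) (hp : -1 < p) :
    IntervalIntegrable (fun t : ℝ => t ^ p * (1 - t) ^ α) MeasureTheory.volume 0 1 :=
  (intervalIntegral.intervalIntegrable_rpow' hp).mul_continuousOn
    ((cont_rpow_aux α hα).continuousOn)

lemma cont_pos_rpow (q : ℝ) (hq : 0 < q) : Continuous fun t : ℝ => t ^ q := by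
  apply continuous_iff_continuousAt.mpr
  intro x
  exact Real.continuousAt_rpow_const _ _ (Or.inr hq.le)

lemma mom_two_pos (α : ℝ) (hα1 : 1 < α) (hα2 : α < 2) : 0 < momInt α 2 := by
  have h : -1 < (2:ℝ) - α - 1 := by linarith
  apply intervalIntegral.intervalIntegral_pos_of_pos_on
    (by simpa using mom_integrable α ((2:ℝ) - α - 1) (by linarith) h)
  · intro t ht
    have h1 : 0 < t ^ ((2:ℝ) - α - 1) := Real.rpow_pos_of_pos ht.1 _
    have h2 : 0 < (1 - t) ^ α := Real.rpow_pos_of_pos (by linarith [ht.2]) _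
    push_cast
    positivity
  · norm_num

lemma mom_succ (α : ℝ) (hα1 : 1 < α) (hα2 : α < 2) (k : ℕ) (hk : 2 ≤ k) :
    momInt α (k + 1) = (((k : ℝ) - α) / ((k : ℝ) + 1)) * momInt α k := by
  have hα0 : (0:ℝ) ≤ α := by linarith
  have hkα : α < (k : ℝ) := by
    have : (2:ℝ) ≤ (k : ℝ) := by exact_mod_cast hk
    linarith
  set p : ℝ := (k : ℝ) - α with hp_def
  have hp : 0 < p := by simp [hp_def]; linarith
  have hp1 : (-1:ℝ) < p - 1 := by linarith
  have hp0 : (-1:ℝ) < p := by linarith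
  set F : ℝ → ℝ := fun t => t ^ p * (1 - t) ^ (α + 1) with hF_def
  set f' : ℝ → ℝ := fun t =>
    ((k : ℝ) - α) * (t ^ (p - 1) * (1 - t) ^ α) - ((k : ℝ) + 1) * (t ^ p * (1 - t) ^ α)
    with hf'_def
  have hderiv : ∀ t ∈ Set.Ioo (0:ℝ) 1, HasDerivAt F (f' t) t := by
    intro t ht
    have ht0 : t ≠ 0 := ne_of_gt ht.1
    have ht1 : (1 - t) ≠ 0 := by have := ht.2; intro h; nlinarith [ht.2]
    have h1 : HasDerivAt (fun t : ℝ => t ^ p) (p * t ^ (p - 1)) t :=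
      Real.hasDerivAt_rpow_const (Or.inl ht0)
    have h2o : HasDerivAt (fun x : ℝ => x ^ (α + 1)) ((α + 1) * (1 - t) ^ (α + 1 - 1)) (1 - t) :=
      Real.hasDerivAt_rpow_const (Or.inl ht1)
    have h2i : HasDerivAt (fun t : ℝ => 1 - t) (-1) t := by
      simpa using (hasDerivAt_id t).const_sub 1
    have h2 := h2o.comp t h2i
    have h : HasDerivAt (fun t : ℝ => t ^ p * (1 - t) ^ (α + 1))
        (p * t ^ (p - 1) * (1 - t) ^ (α + 1) + t ^ p * ((α + 1) * (1 - t) ^ (α + 1 - 1) * -1)) t :=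
      h1.mul h2
    convert h using 1
    have e1 : (1 - t) ^ (α + 1) = (1 - t) ^ α * (1 - t) := Real.rpow_add_one ht1 α
    have e2 : t ^ p = t ^ (p - 1) * t := by
      rw [← Real.rpow_add_one ht0]; ring_nf
    simp only [Function.comp, hf'_def]
    rw [show α + 1 - 1 = α from by ring, e1, e2]
    ring
  have hint : IntervalIntegrable f' MeasureTheory.volume 0 1 := by
    exact ((mom_integrable α (p-1) hα0 hp1).const_mul _).sub
      ((mom_integrable α p hα0 hp0).const_mul _)
  have hcont : ContinuousOn F (Set.Icc 0 1) :=
    ((cont_pos_rpow p hp).mul (cont_rpow_aux (α + 1) (by linarith))).continuousOn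
  have key := intervalIntegral.integral_eq_sub_of_hasDerivAt_of_le zero_le_one hcont hderiv hint
  have hF1 : F 1 = 0 := by
    simp [hF_def, Real.zero_rpow (by linarith : α + 1 ≠ 0)]
  have hF0 : F 0 = 0 := by
    simp [hF_def, Real.zero_rpow (ne_of_gt hp)]
  rw [hF1, hF0, sub_zero] at key
  have hsplit : (∫ t in (0:ℝ)..1, f' t)
      = ((k : ℝ) - α) * momInt α k - ((k : ℝ) + 1) * momInt α (k + 1) := by
    have i1 := (mom_integrable α (p-1) hα0 hp1).const_mul ((k : ℝ) - α)
    have i2 := (mom_integrable α p hα0 hp0).const_mul ((k : ℝ) + 1)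
    have m1 : (∫ t in (0:ℝ)..1, t ^ (p - 1) * (1 - t) ^ α) = momInt α k := by
      unfold momInt
      rw [show (k:ℝ) - α - 1 = p - 1 from by rw [hp_def]]
    have m2 : (∫ t in (0:ℝ)..1, t ^ p * (1 - t) ^ α) = momInt α (k + 1) := by
      unfold momInt
      rw [show ((k+1:ℕ):ℝ) - α - 1 = p from by push_cast; rw [hp_def]; ring]
    simp only [hf'_def]
    rw [intervalIntegral.integral_sub i1 i2, intervalIntegral.integral_const_mul,
      intervalIntegral.integral_const_mul, m1, m2]
  rw [hsplit] at key
  have hk1 : ((k : ℝ) + 1) ≠ 0 := by positivity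
  field_simp
  simp only [hp_def] at key ⊢
  linarith [key]

lemma fracBinom_eq_mul_momInt (α : ℝ) (hα1 : 1 < α) (hα2 : α < 2)
    (k : ℕ) (hk : 2 ≤ k) :
    fracBinom α k = (fracBinom α 2 / momInt α 2) * momInt α k := by
  induction k, hk using Nat.le_induction with
  | base =>
    rw [div_mul_cancel₀]
    exact (mom_two_pos α hα1 hα2).ne'
  | succ n hn ih =>
    rw [fracBinom_succ, ih, mom_succ α hα1 hα2 n hn]
    ring

set_option maxHeartbeats 1600000 in
open Matrix in
/-- The Hankel matrix `H_{ij} = g_{i+j}^(α)` (indices `i, j = 1, …, N`) is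
positive semidefinite for `1 ≤ α ≤ 2`. -/
theorem hankel_fracBinom_posSemidef (N : ℕ) (α : ℝ) (hα : 1 ≤ α) (hα' : α ≤ 2) :
    (Matrix.of fun i j : Fin N => fracBinom α (((i : ℕ) + 1) + ((j : ℕ) + 1))).PosSemidef := by
  have herm : (Matrix.of fun i j : Fin N =>
      fracBinom α (((i : ℕ) + 1) + ((j : ℕ) + 1))).IsHermitian := by
    unfold Matrix.IsHermitian
    ext i j
    simp only [Matrix.conjTranspose_apply, Matrix.of_apply, star_trivial]
    congr 1
    omega
  rcases eq_or_lt_of_le hα with h1 | h1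
  · -- α = 1 : the matrix is zero
    have hz : ∀ k : ℕ, 2 ≤ k → fracBinom α k = 0 := by
      intro k hk
      unfold fracBinom
      rw [Finset.prod_eq_zero (Finset.mem_range.mpr (by omega : 1 < k))
        (by rw [← h1]; norm_num)]
      ring
    have : (Matrix.of fun i j : Fin N => fracBinom α (((i : ℕ) + 1) + ((j : ℕ) + 1)))
        = (0 : Matrix (Fin N) (Fin N) ℝ) := by
      ext i j
      simp only [Matrix.of_apply, Matrix.zero_apply]
      exact hz _ (by omega)
    rw [this]
    exact Matrix.PosSemidef.zero
  rcases eq_or_lt_of_le hα' with h2 | h2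
  · -- α = 2 : the matrix is e₀ e₀ᵀ
    have hz : ∀ k : ℕ, 3 ≤ k → fracBinom α k = 0 := by
      intro k hk
      unfold fracBinom
      rw [Finset.prod_eq_zero (Finset.mem_range.mpr (by omega : 2 < k))
        (by rw [h2]; norm_num)]
      ring
    set A : Matrix (Fin N) Unit ℝ :=
      Matrix.of fun i _ => if (i : ℕ) = 0 then (1:ℝ) else 0 with hA
    have : (Matrix.of fun i j : Fin N => fracBinom α (((i : ℕ) + 1) + ((j : ℕ) + 1)))
        = A * A.conjTranspose := by
      ext i j
      simp only [Matrix.of_apply, Matrix.mul_apply, Matrix.conjTranspose_apply, hA,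
        star_trivial, Finset.univ_unique, Finset.sum_singleton]
      by_cases hi : (i : ℕ) = 0
      · by_cases hj : (j : ℕ) = 0
        · rw [hi, hj]
          simp [h2, fracBinom_two]
          norm_num
        · have h0 : fracBinom α (((i : ℕ) + 1) + ((j : ℕ) + 1)) = 0 := hz _ (by omega)
          simp [hi, hj] at h0 ⊢
          exact h0
      · have h0 : fracBinom α (((i : ℕ) + 1) + ((j : ℕ) + 1)) = 0 := hz _ (by omega)
        simp [hi] at h0 ⊢
        exact h0
    rw [this]
    exact Matrix.posSemidef_self_mul_conjTranspose A
  -- main case 1 < α < 2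
  have hα0 : (0:ℝ) ≤ α := by linarith
  set c : ℝ := fracBinom α 2 / momInt α 2 with hc
  have hcpos : 0 ≤ c := by
    apply div_nonneg _ (mom_two_pos α h1 h2).le
    rw [fracBinom_two]
    nlinarith
  refine Matrix.posSemidef_iff_dotProduct_mulVec.mpr ⟨herm, fun x => ?_⟩
  -- abbreviations
  set a : Fin N → ℝ := fun i => ((i : ℕ) : ℝ) + 1 - (α + 1) / 2 with ha
  have hexp : ∀ i j : Fin N,
      ((((i : ℕ) + 1) + ((j : ℕ) + 1) : ℕ) : ℝ) - α - 1 = a i + a j := by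
    intro i j
    push_cast [ha]
    ring
  have hterm_int : ∀ i j : Fin N, IntervalIntegrable
      (fun t : ℝ => x i * x j * (t ^ (a i + a j) * (1 - t) ^ α)) MeasureTheory.volume 0 1 := by
    intro i j
    have : -1 < a i + a j := by
      have hi : (0:ℝ) ≤ ((i : ℕ) : ℝ) := Nat.cast_nonneg _
      have hj : (0:ℝ) ≤ ((j : ℕ) : ℝ) := Nat.cast_nonneg _
      simp only [ha]
      linarith
    exact (mom_integrable α _ hα0 this).const_mul _
  have expand : (star x) ⬝ᵥ ((Matrix.of fun i j : Fin N =>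
        fracBinom α (((i : ℕ) + 1) + ((j : ℕ) + 1))) *ᵥ x)
      = ∑ p : Fin N × Fin N,
          x p.1 * x p.2 * fracBinom α (((p.1 : ℕ) + 1) + ((p.2 : ℕ) + 1)) := by
    simp only [dotProduct, Matrix.mulVec, Matrix.of_apply, star_trivial,
      Fintype.sum_prod_type, dotProduct, Finset.mul_sum]
    refine Finset.sum_congr rfl fun i _ => Finset.sum_congr rfl fun j _ => by ring
  rw [expand]
  have rep : ∀ p : Fin N × Fin N,
      x p.1 * x p.2 * fracBinom α (((p.1 : ℕ) + 1) + ((p.2 : ℕ) + 1))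
      = c * ∫ t in (0:ℝ)..1, x p.1 * x p.2 * (t ^ (a p.1 + a p.2) * (1 - t) ^ α) := by
    intro p
    rw [fracBinom_eq_mul_momInt α h1 h2 _ (by omega), ← hc]
    unfold momInt
    rw [hexp p.1 p.2, intervalIntegral.integral_const_mul]
    ring
  simp only [rep]
  have hswap := intervalIntegral.integral_finset_sum (μ := MeasureTheory.volume)
    (a := (0:ℝ)) (b := 1) (s := Finset.univ)
    (f := fun (p : Fin N × Fin N) (t : ℝ) => x p.1 * x p.2 * (t ^ (a p.1 + a p.2) * (1 - t) ^ α))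
    (fun p _ => hterm_int p.1 p.2)
  rw [← Finset.mul_sum, ← hswap]
  apply mul_nonneg hcpos
  apply intervalIntegral.integral_nonneg zero_le_one
  intro t ht
  beta_reduce
  rcases eq_or_lt_of_le ht.1 with ht0 | ht0
  · -- t = 0
    apply Finset.sum_nonneg
    intro p _
    have hne : a p.1 + a p.2 ≠ 0 := by
      simp only [ha]
      rcases Nat.eq_zero_or_pos ((p.1 : ℕ) + (p.2 : ℕ)) with h | h
      · have h' : ((p.1 : ℕ) : ℝ) + ((p.2 : ℕ) : ℝ) = 0 := by exact_mod_cast h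
        intro hcon; nlinarith
      · have h' : (1:ℝ) ≤ ((p.1 : ℕ) : ℝ) + ((p.2 : ℕ) : ℝ) := by exact_mod_cast h
        intro hcon; nlinarith
    rw [← ht0, Real.zero_rpow hne]
    simp
  · -- 0 < t
    have hsq : ∑ p : Fin N × Fin N, x p.1 * x p.2 * (t ^ (a p.1 + a p.2) * (1 - t) ^ α)
        = (∑ i : Fin N, x i * t ^ (a i)) ^ 2 * (1 - t) ^ α := by
      rw [sq, Finset.sum_mul_sum, Finset.sum_mul, Fintype.sum_prod_type]
      refine Finset.sum_congr rfl fun i _ => ?_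
      rw [Finset.sum_mul]
      refine Finset.sum_congr rfl fun j _ => ?_
      rw [Real.rpow_add ht0]
      ring
    rw [hsq]
    have : (0:ℝ) ≤ (1 - t) ^ α := Real.rpow_nonneg (by linarith [ht.2]) _
    positivity
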